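/- Let X and Y be random variables, each uniformly distributed on [0,1], such that (X,Y) ∈ IC_r for some r ∈ [-1,1]. Then the lower tail-dependence coefficient of (X,Y) exists and equals r, i.e. P(X ≤ u, Y ≤ u)/u → r as u → 0⁺. -/

import Mathlib

open MeasureTheory ProbabilityTheory

variable {Ω : Type*} [MeasurableSpace Ω]

noncomputable def cov (μ : Measure Ω) (X Y : Ω → ℝ) : ℝ :=
  ∫ ω, (X ω - ∫ a, X a ∂μ) * (Y ω - ∫ a, Y a ∂μ) ∂μ

noncomputable def corr (μ : Measure Ω) (X Y : Ω → ℝ) : ℝ :=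
  cov μ X Y / Real.sqrt (variance X μ * variance Y μ)

def Admissible (μ : Measure Ω) (X Y : Ω → ℝ) (g : ℝ → ℝ) : Prop :=
  Measurable g ∧ MemLp (g ∘ X) 2 μ ∧ MemLp (g ∘ Y) 2 μ ∧
    0 < variance (g ∘ X) μ ∧ 0 < variance (g ∘ Y) μ

def IC (μ : Measure Ω) (X Y : Ω → ℝ) (r : ℝ) : Prop :=
  corr μ X Y = r ∧ ∀ g : ℝ → ℝ, Admissible μ X Y g → corr μ (g ∘ X) (g ∘ Y) = r

/-- Measure of `X ≤ u` for `X` uniform on `[0,1]`. -/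
lemma unif_measure_Iic (μ : Measure Ω) (X : Ω → ℝ) (hXm : Measurable X)
    (hX : Measure.map X μ = MeasureTheory.volume.restrict (Set.Icc (0 : ℝ) 1)) {u : ℝ}
    (h0 : 0 ≤ u) (h1 : u ≤ 1) : μ (X ⁻¹' Set.Iic u) = ENNReal.ofReal u := by
  rw [← Measure.map_apply hXm measurableSet_Iic, hX,
    Measure.restrict_apply measurableSet_Iic]
  have hset : Set.Iic u ∩ Set.Icc 0 1 = Set.Icc 0 u := by
    ext x
    simp only [Set.mem_inter_iff, Set.mem_Iic, Set.mem_Icc]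
    exact ⟨fun h => ⟨h.2.1, h.1⟩, fun h => ⟨h.2, h.1, h.2.trans h1⟩⟩
  rw [hset, Real.volume_Icc, sub_zero]

/-- The integral of a constant-one indicator. -/
lemma integral_ind (μ : Measure Ω) [IsProbabilityMeasure μ] {s : Set Ω}
    (hs : MeasurableSet s) :
    ∫ ω, s.indicator (fun _ => (1 : ℝ)) ω ∂μ = (μ s).toReal := by
  rw [integral_indicator_const (1 : ℝ) hs, smul_eq_mul, mul_one, measureReal_def]

lemma ind_sq (s : Set Ω) :
    (s.indicator (fun _ => (1 : ℝ))) ^ 2 = s.indicator (fun _ => (1 : ℝ)) := by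
  funext ω
  by_cases h : ω ∈ s <;> simp [Set.indicator_apply, h]

lemma ind_memℒp (μ : Measure Ω) [IsProbabilityMeasure μ] {s : Set Ω}
    (hs : MeasurableSet s) : MemLp (s.indicator (fun _ => (1 : ℝ))) 2 μ :=
  (memLp_const (1 : ℝ)).indicator hs

/-- Variance of a constant-one indicator. -/
lemma variance_ind (μ : Measure Ω) [IsProbabilityMeasure μ] {s : Set Ω}
    (hs : MeasurableSet s) :
    variance (s.indicator (fun _ => (1 : ℝ))) μ = (μ s).toReal - (μ s).toReal ^ 2 := by
  rw [variance_eq_sub (ind_memℒp μ hs)]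
  have : ((s.indicator (fun _ => (1 : ℝ))) ^ 2) = s.indicator (fun _ => (1 : ℝ)) :=
    ind_sq s
  rw [this, integral_ind μ hs]

/-- Covariance of two constant-one indicators. -/
lemma cov_ind (μ : Measure Ω) [IsProbabilityMeasure μ] {s t : Set Ω}
    (hs : MeasurableSet s) (ht : MeasurableSet t) :
    cov μ (s.indicator (fun _ => (1 : ℝ))) (t.indicator (fun _ => (1 : ℝ)))
      = (μ (s ∩ t)).toReal - (μ s).toReal * (μ t).toReal := by
  set f := s.indicator (fun _ => (1 : ℝ)) with hf
  set h := t.indicator (fun _ => (1 : ℝ)) with hh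
  set a := (μ s).toReal with ha
  set b := (μ t).toReal with hb
  have hfa : ∫ ω, f ω ∂μ = a := integral_ind μ hs
  have hhb : ∫ ω, h ω ∂μ = b := integral_ind μ ht
  have hprod : ∀ ω, f ω * h ω = (s ∩ t).indicator (fun _ => (1 : ℝ)) ω := by
    intro ω
    by_cases hω1 : ω ∈ s <;> by_cases hω2 : ω ∈ t <;>
      simp [hf, hh, Set.indicator_apply, hω1, hω2]
  have hpt : (fun ω => (f ω - ∫ x, f x ∂μ) * (h ω - ∫ x, h x ∂μ))
      = fun ω => (s ∩ t).indicator (fun _ => (1 : ℝ)) ω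
          + (a * b - a * h ω - b * f ω) := by
    funext ω
    rw [hfa, hhb, ← hprod ω]
    ring
  have hist : Integrable ((s ∩ t).indicator (fun _ => (1 : ℝ))) μ :=
    (integrable_const (1 : ℝ)).indicator (hs.inter ht)
  have hif : Integrable f μ := (integrable_const (1 : ℝ)).indicator hs
  have hih : Integrable h μ := (integrable_const (1 : ℝ)).indicator ht
  have hirest : Integrable (fun ω => a * b - a * h ω - b * f ω) μ :=
    ((integrable_const (a * b)).sub (hih.const_mul a)).sub (hif.const_mul b)
  have hirest1 : Integrable (fun ω => a * b - a * h ω) μ :=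
    (integrable_const (a * b)).sub (hih.const_mul a)
  rw [cov, hpt, integral_add hist hirest, integral_ind μ (hs.inter ht),
    integral_sub hirest1 (hif.const_mul b),
    integral_sub (integrable_const (a * b)) (hih.const_mul a),
    integral_const, integral_const_mul, integral_const_mul, hfa, hhb,
    probReal_univ]
  simp only [ENNReal.toReal_one, smul_eq_mul, one_mul]
  ring

/-- Key identity: for `u ∈ (0,1)`, `P(X ≤ u, Y ≤ u) = r·u(1-u) + u²`. -/
lemma ic_key (μ : Measure Ω) [IsProbabilityMeasure μ] (X Y : Ω → ℝ)
    (hXm : Measurable X) (hYm : Measurable Y)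
    (hXunif : Measure.map X μ = MeasureTheory.volume.restrict (Set.Icc (0 : ℝ) 1))
    (hYunif : Measure.map Y μ = MeasureTheory.volume.restrict (Set.Icc (0 : ℝ) 1))
    (r : ℝ) (hIC : IC μ X Y r) {u : ℝ} (hu : u ∈ Set.Ioo (0 : ℝ) 1) :
    (μ {ω | X ω ≤ u ∧ Y ω ≤ u}).toReal = r * (u * (1 - u)) + u ^ 2 := by
  obtain ⟨hu0, hu1⟩ := hu
  set g : ℝ → ℝ := (Set.Iic u).indicator (fun _ => (1 : ℝ)) with hg
  set s : Set Ω := X ⁻¹' Set.Iic u with hsdef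
  set t : Set Ω := Y ⁻¹' Set.Iic u with htdef
  have hsm : MeasurableSet s := hXm measurableSet_Iic
  have htm : MeasurableSet t := hYm measurableSet_Iic
  have hgX : g ∘ X = s.indicator (fun _ => (1 : ℝ)) := by
    funext ω
    exact (Set.indicator_comp_right X (s := Set.Iic u) (g := fun _ => (1 : ℝ))).symm
  have hgY : g ∘ Y = t.indicator (fun _ => (1 : ℝ)) := by
    funext ω
    exact (Set.indicator_comp_right Y (s := Set.Iic u) (g := fun _ => (1 : ℝ))).symm
  have hμs : (μ s).toReal = u := by
    rw [hsdef, unif_measure_Iic μ X hXm hXunif hu0.le hu1.le,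
      ENNReal.toReal_ofReal hu0.le]
  have hμt : (μ t).toReal = u := by
    rw [htdef, unif_measure_Iic μ Y hYm hYunif hu0.le hu1.le,
      ENNReal.toReal_ofReal hu0.le]
  have hvar : u - u ^ 2 > 0 := by nlinarith
  have hvX : variance (g ∘ X) μ = u - u ^ 2 := by
    rw [hgX, variance_ind μ hsm, hμs]
  have hvY : variance (g ∘ Y) μ = u - u ^ 2 := by
    rw [hgY, variance_ind μ htm, hμt]
  have hadm : Admissible μ X Y g := by
    refine ⟨measurable_const.indicator measurableSet_Iic, ?_, ?_, ?_, ?_⟩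
    · rw [hgX]; exact ind_memℒp μ hsm
    · rw [hgY]; exact ind_memℒp μ htm
    · rw [hvX]; exact hvar
    · rw [hvY]; exact hvar
  have hcorr := hIC.2 g hadm
  rw [corr, hvX, hvY, Real.sqrt_mul_self hvar.le] at hcorr
  have hcov : cov μ (g ∘ X) (g ∘ Y) = (μ (s ∩ t)).toReal - u * u := by
    rw [hgX, hgY, cov_ind μ hsm htm, hμs, hμt]
  rw [hcov, div_eq_iff (ne_of_gt hvar)] at hcorr
  have hset : {ω | X ω ≤ u ∧ Y ω ≤ u} = s ∩ t := rfl
  rw [hset]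
  nlinarith [hcorr]

/-- If `X` and `Y` are uniform on `[0,1]` and `(X,Y) ∈ IC_r` for some
`r ∈ [-1,1]`, then the lower tail-dependence coefficient exists and equals `r`:
`P(X ≤ u, Y ≤ u)/u → r` as `u → 0⁺`. -/
theorem ic_tail_dependence
    (μ : Measure Ω) [IsProbabilityMeasure μ] (X Y : Ω → ℝ)
    (hXm : Measurable X) (hYm : Measurable Y)
    (hXunif : Measure.map X μ = MeasureTheory.volume.restrict (Set.Icc (0 : ℝ) 1))
    (hYunif : Measure.map Y μ = MeasureTheory.volume.restrict (Set.Icc (0 : ℝ) 1))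
    (r : ℝ) (hr : r ∈ Set.Icc (-1 : ℝ) 1) (hIC : IC μ X Y r) :
    Filter.Tendsto (fun u : ℝ => (μ {ω | X ω ≤ u ∧ Y ω ≤ u}).toReal / u)
      (nhdsWithin 0 (Set.Ioi 0)) (nhds r) := by
  have hlim : Filter.Tendsto (fun u : ℝ => r * (1 - u) + u)
      (nhdsWithin 0 (Set.Ioi 0)) (nhds r) := by
    have cont : Continuous fun u : ℝ => r * (1 - u) + u := by continuity
    have := (cont.tendsto 0).mono_left (nhdsWithin_le_nhds (s := Set.Ioi 0))
    simpa using this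
  refine hlim.congr' ?_
  have hmem : Set.Ioo (0 : ℝ) 1 ∈ nhdsWithin 0 (Set.Ioi 0) := by
    rw [show Set.Ioo (0 : ℝ) 1 = Set.Iio 1 ∩ Set.Ioi 0 by ext x; simp [Set.mem_Ioo, and_comm]]
    exact Filter.inter_mem (nhdsWithin_le_nhds (Iio_mem_nhds one_pos)) self_mem_nhdsWithin
  filter_upwards [hmem] with u hu
  rw [ic_key μ X Y hXm hYm hXunif hYunif r hIC hu]
  rw [eq_div_iff (ne_of_gt hu.1)]
  ring
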